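/- If G is a complete multipartite graph on 2n vertices whose independence number is at most n, then G contains at least n! perfect matchings. -/

import Mathlib

set_option linter.unusedSectionVars false

open Finset

section Aux
variable {V : Type*} {ι : Type*} [DecidableEq V] [DecidableEq ι]

/-- Matchings on `s` encoded as fixpoint-free (on `s`) involutions crossing parts. -/
def MSet (f : V → ι) (s : Finset V) : Set (V → V) :=
  {g | (∀ x ∈ s, g x ∈ s ∧ g (g x) = x ∧ f (g x) ≠ f x) ∧ ∀ x ∉ s, g x = x}

variable [Fintype V]

noncomputable def MFin (f : V → ι) (s : Finset V) : Finset (V → V) :=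
  @Finset.filter _ (· ∈ MSet f s) (Classical.decPred _) Finset.univ

lemma mem_MFin {f : V → ι} {s : Finset V} {g : V → V} :
    g ∈ MFin f s ↔ g ∈ MSet f s := by
  simp [MFin]

lemma key (f : V → ι) : ∀ m (s : Finset V), s.card = 2 * m →
    (∀ i, (s.filter (fun x => f x = i)).card ≤ m) →
    m.factorial ≤ (MFin f s).card := by
  intro m
  induction m with
  | zero =>
    intro s hs _
    have hse : s = ∅ := Finset.card_eq_zero.mp (by omega)
    have : (id : V → V) ∈ MFin f s := by
      rw [mem_MFin]
      subst hse
      constructor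
      · intro x hx; simp at hx
      · intro x _; rfl
    simpa [Nat.factorial] using Finset.card_pos.mpr ⟨_, this⟩
  | succ m ih =>
    intro s hs hfib
    have hsne : s.Nonempty := Finset.card_pos.mp (by omega)
    -- choose a vertex in a largest part
    obtain ⟨i₀, hi₀mem, hi₀max⟩ :=
      Finset.exists_max_image (s.image f) (fun i => (s.filter (fun x => f x = i)).card)
        (hsne.image f)
    obtain ⟨v, hv, hfv⟩ := Finset.mem_image.mp hi₀mem
    -- the candidates for v's partner
    set U := s.filter (fun x => f x ≠ f v) with hUdef
    have hsplit := Finset.card_filter_add_card_filter_not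
      (s := s) (p := fun x => f x = f v)
    have hfibv : (s.filter (fun x => f x = f v)).card ≤ m + 1 := hfib (f v)
    have hUcard : m + 1 ≤ U.card := by
      have : U = s.filter (fun x => ¬ f x = f v) := rfl
      rw [this]; omega
    -- for each u ∈ U, the reduced set
    have hstep : ∀ u ∈ U, ((s.erase v).erase u).card = 2 * m ∧
        (∀ i, (((s.erase v).erase u).filter (fun x => f x = i)).card ≤ m) := by
      intro u hu
      rw [hUdef, Finset.mem_filter] at hu
      obtain ⟨hus, hufv⟩ := hu
      have huv : u ≠ v := fun h => hufv (by rw [h])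
      have hue : u ∈ s.erase v := Finset.mem_erase.mpr ⟨huv, hus⟩
      constructor
      · rw [Finset.card_erase_of_mem hue, Finset.card_erase_of_mem hv]; omega
      · intro i
        have hcomm : ((s.erase v).erase u).filter (fun x => f x = i)
            = ((s.filter (fun x => f x = i)).erase v).erase u := by
          rw [Finset.filter_erase, Finset.filter_erase]
        rw [hcomm]
        by_cases hiv : i = f v
        · subst hiv
          have hvmem : v ∈ s.filter (fun x => f x = f v) :=
            Finset.mem_filter.mpr ⟨hv, rfl⟩
          calc (((s.filter (fun x => f x = f v)).erase v).erase u).card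
              ≤ ((s.filter (fun x => f x = f v)).erase v).card :=
                Finset.card_le_card (Finset.erase_subset _ _)
            _ = (s.filter (fun x => f x = f v)).card - 1 :=
                 Finset.card_erase_of_mem hvmem
            _ ≤ m := by omega
        · by_cases hiu : i = f u
          · subst hiu
            have humem : u ∈ s.filter (fun x => f x = f u) :=
              Finset.mem_filter.mpr ⟨hus, rfl⟩
            have hfibu := hfib (f u)
            calc (((s.filter (fun x => f x = f u)).erase v).erase u).card
                = (((s.filter (fun x => f x = f u)).erase u).erase v).card := by
                  rw [Finset.erase_right_comm]
              _ ≤ ((s.filter (fun x => f x = f u)).erase u).card :=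
                  Finset.card_le_card (Finset.erase_subset _ _)
              _ = (s.filter (fun x => f x = f u)).card - 1 :=
                  Finset.card_erase_of_mem humem
              _ ≤ m := by omega
          · -- i differs from both f v and f u
            set A := s.filter (fun x => f x = i) with hA
            have hAe : ((A.erase v).erase u).card ≤ A.card :=
              Finset.card_le_card ((Finset.erase_subset _ _).trans (Finset.erase_subset _ _))
            rcases A.eq_empty_or_nonempty with hAemp | hAne
            · rw [hAemp] at hAe ⊢; simp at hAe ⊢
            · obtain ⟨a, ha⟩ := hAne
              rw [hA, Finset.mem_filter] at ha
              have hiimg : i ∈ s.image f := Finset.mem_image.mpr ⟨a, ha.1, ha.2⟩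
              have hmax : A.card ≤ (s.filter (fun x => f x = f v)).card := by
                rw [hA, hfv]
                exact hi₀max i hiimg
              have hdisj : Disjoint A (s.filter (fun x => f x = f v)) := by
                rw [Finset.disjoint_left]
                intro x hx hx'
                rw [hA, Finset.mem_filter] at hx
                rw [Finset.mem_filter] at hx'
                exact hiv (hx.2.symm.trans hx'.2)
              have hsub : A ∪ s.filter (fun x => f x = f v) ⊆ s.erase u := by
                intro x hx
                rcases Finset.mem_union.mp hx with hx | hx
                · rw [hA, Finset.mem_filter] at hx
                  exact Finset.mem_erase.mpr ⟨fun h => hiu (h ▸ hx.2).symm, hx.1⟩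
                · rw [Finset.mem_filter] at hx
                  exact Finset.mem_erase.mpr ⟨fun h => hufv (h ▸ hx.2), hx.1⟩
              have hcards : A.card + (s.filter (fun x => f x = f v)).card ≤ s.card - 1 := by
                rw [← Finset.card_union_of_disjoint hdisj]
                calc (A ∪ s.filter (fun x => f x = f v)).card
                    ≤ (s.erase u).card := Finset.card_le_card hsub
                  _ = s.card - 1 := Finset.card_erase_of_mem hus
              omega
    -- the extension map
    set Φ : V → (V → V) → (V → V) :=
      fun u g => Function.update (Function.update g v u) u v with hΦdef
    have hΦv : ∀ u g, u ≠ v → Φ u g v = u := by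
      intro u g huv
      simp only [hΦdef]
      rw [Function.update_of_ne huv.symm, Function.update_self]
    have hΦu : ∀ u g, Φ u g u = v := by
      intro u g; rw [hΦdef]; simp
    have hΦo : ∀ u g x, x ≠ u → x ≠ v → Φ u g x = g x := by
      intro u g x hxu hxv
      simp only [hΦdef]
      rw [Function.update_of_ne hxu, Function.update_of_ne hxv]
    -- inclusion
    have hincl : (U.biUnion fun u => (MFin f ((s.erase v).erase u)).image (Φ u))
        ⊆ MFin f s := by
      intro h hh
      rw [Finset.mem_biUnion] at hh
      obtain ⟨u, hu, hh⟩ := hh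
      rw [Finset.mem_image] at hh
      obtain ⟨g, hg, rfl⟩ := hh
      rw [mem_MFin] at hg ⊢
      obtain ⟨hg1, hg2⟩ := hg
      rw [hUdef, Finset.mem_filter] at hu
      obtain ⟨hus, hufv⟩ := hu
      have huv : u ≠ v := fun h => hufv (by rw [h])
      have hnotv : v ∉ (s.erase v).erase u := fun h =>
        (Finset.mem_erase.mp (Finset.mem_of_mem_erase h)).1 rfl
      have hnotu : u ∉ (s.erase v).erase u := fun h => (Finset.mem_erase.mp h).1 rfl
      constructor
      · intro x hx
        by_cases hxv : x = v
        · subst hxv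
          rw [hΦv u g huv, hΦu]
          exact ⟨hus, rfl, fun h => hufv h⟩
        · by_cases hxu : x = u
          · subst hxu
            rw [hΦu, hΦv x g huv]
            exact ⟨hv, rfl, fun h => hufv h.symm⟩
          · have hxs : x ∈ (s.erase v).erase u :=
              Finset.mem_erase.mpr ⟨hxu, Finset.mem_erase.mpr ⟨hxv, hx⟩⟩
            obtain ⟨hgx, hggx, hfgx⟩ := hg1 x hxs
            have hgxu : g x ≠ u := fun h => hnotu (h ▸ hgx)
            have hgxv : g x ≠ v := fun h => hnotv (h ▸ hgx)
            rw [hΦo u g x hxu hxv, hΦo u g (g x) hgxu hgxv]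
            exact ⟨Finset.mem_of_mem_erase (Finset.mem_of_mem_erase hgx), hggx, hfgx⟩
      · intro x hx
        have hxu : x ≠ u := fun h => hx (h ▸ hus)
        have hxv : x ≠ v := fun h => hx (h ▸ hv)
        rw [hΦo u g x hxu hxv]
        exact hg2 x (fun h => hx (Finset.mem_of_mem_erase (Finset.mem_of_mem_erase h)))
    -- now the counting
    have hdisjim : ∀ u₁ ∈ U, ∀ u₂ ∈ U, u₁ ≠ u₂ →
        Disjoint ((MFin f ((s.erase v).erase u₁)).image (Φ u₁))
          ((MFin f ((s.erase v).erase u₂)).image (Φ u₂)) := by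
      intro u₁ hu₁ u₂ hu₂ hne
      have h1 : u₁ ≠ v := by
        rw [hUdef, Finset.mem_filter] at hu₁
        exact fun h => hu₁.2 (by rw [h])
      have h2 : u₂ ≠ v := by
        rw [hUdef, Finset.mem_filter] at hu₂
        exact fun h => hu₂.2 (by rw [h])
      rw [Finset.disjoint_left]
      intro h hh1 hh2
      rw [Finset.mem_image] at hh1 hh2
      obtain ⟨g₁, _, rfl⟩ := hh1
      obtain ⟨g₂, _, heq⟩ := hh2
      apply hne
      have := congrFun heq v
      rw [hΦv u₂ g₂ h2, hΦv u₁ g₁ h1] at this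
      exact this.symm
    have hinj : ∀ u ∈ U, ((MFin f ((s.erase v).erase u)).image (Φ u)).card
        = (MFin f ((s.erase v).erase u)).card := by
      intro u hu
      apply Finset.card_image_of_injOn
      intro g₁ hg₁ g₂ hg₂ heq
      rw [Finset.mem_coe, mem_MFin] at hg₁ hg₂
      have hg₁v := hg₁.2 v (fun h =>
        (Finset.mem_erase.mp (Finset.mem_of_mem_erase h)).1 rfl)
      have hg₂v := hg₂.2 v (fun h =>
        (Finset.mem_erase.mp (Finset.mem_of_mem_erase h)).1 rfl)
      have hg₁u := hg₁.2 u (fun h => (Finset.mem_erase.mp h).1 rfl)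
      have hg₂u := hg₂.2 u (fun h => (Finset.mem_erase.mp h).1 rfl)
      funext x
      by_cases hxu : x = u
      · subst hxu; rw [hg₁u, hg₂u]
      · by_cases hxv : x = v
        · subst hxv; rw [hg₁v, hg₂v]
        · have := congrFun heq x
          rwa [hΦo u g₁ x hxu hxv, hΦo u g₂ x hxu hxv] at this
    calc (m + 1).factorial = (m + 1) * m.factorial := rfl
      _ ≤ U.card * m.factorial := Nat.mul_le_mul_right _ hUcard
      _ = ∑ _u ∈ U, m.factorial := by rw [Finset.sum_const, smul_eq_mul]
      _ ≤ ∑ u ∈ U, ((MFin f ((s.erase v).erase u)).image (Φ u)).card := by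
          apply Finset.sum_le_sum
          intro u hu
          rw [hinj u hu]
          exact ih _ (hstep u hu).1 (hstep u hu).2
      _ = (U.biUnion fun u => (MFin f ((s.erase v).erase u)).image (Φ u)).card :=
          (Finset.card_biUnion hdisjim).symm
      _ ≤ (MFin f s).card := Finset.card_le_card hincl

end Aux

/-- A complete multipartite graph on `2n` vertices with independence number at most `n`
contains at least `n!` perfect matchings. -/
theorem stmt_10 (n : ℕ) (V : Type*) [Fintype V] (hV : Fintype.card V = 2 * n)
    (G : SimpleGraph V) {ι : Type*} (f : V → ι)
    (hmultipartite : ∀ u v : V, G.Adj u v ↔ f u ≠ f v)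
    (hindep : ∀ s : Finset V, (∀ u ∈ s, ∀ v ∈ s, ¬ G.Adj u v) → s.card ≤ n) :
    Nat.factorial n ≤ {M : G.Subgraph | M.IsPerfectMatching}.ncard := by
  classical
  have hkey := key (V := V) (ι := ι) f n Finset.univ (by simpa using hV)
    (by
      intro i
      apply hindep
      intro u hu v hv hadj
      rw [Finset.mem_filter] at hu hv
      exact (hmultipartite u v).mp hadj (hu.2.trans hv.2.symm))
  -- map involutions to subgraphs
  have hfinPM : ({M : G.Subgraph | M.IsPerfectMatching}).Finite := by
    haveI : Finite G.Subgraph := by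
      apply Finite.of_injective (fun M : G.Subgraph => (M.verts, M.Adj))
      intro M N h
      ext1 <;> simp_all
    exact Set.toFinite _
  set Ψ : (V → V) → G.Subgraph := fun g =>
    { verts := Set.univ
      Adj := fun a b => g a = b ∧ g b = a ∧ f a ≠ f b
      adj_sub := fun h => (hmultipartite _ _).mpr h.2.2
      edge_vert := fun _ => trivial
      symm := ⟨fun a b ⟨h1, h2, h3⟩ => ⟨h2, h1, h3.symm⟩⟩ } with hΨdef
  have hΨadj : ∀ g a b, (Ψ g).Adj a b ↔ (g a = b ∧ g b = a ∧ f a ≠ f b) := by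
    intro g a b; rw [hΨdef]
  have hΨmem : ∀ g ∈ MSet f (Finset.univ : Finset V), ∀ a, (Ψ g).Adj a (g a) := by
    intro g hg a
    obtain ⟨hga, hgga, hfga⟩ := hg.1 a (Finset.mem_univ a)
    rw [hΨadj]
    exact ⟨rfl, hgga, fun h => hfga h.symm⟩
  have hinjΨ : Set.InjOn Ψ ↑(MFin f (Finset.univ : Finset V)) := by
    intro g₁ hg₁ g₂ hg₂ heq
    rw [Finset.mem_coe, mem_MFin] at hg₁ hg₂
    funext a
    have h1 := hΨmem g₁ hg₁ a
    rw [heq, hΨadj] at h1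
    exact h1.1.symm
  have hsub : Ψ '' ↑(MFin f (Finset.univ : Finset V)) ⊆
      {M : G.Subgraph | M.IsPerfectMatching} := by
    rintro _ ⟨g, hg, rfl⟩
    rw [Finset.mem_coe, mem_MFin] at hg
    constructor
    · intro a _
      refine ⟨g a, hΨmem g hg a, ?_⟩
      intro b hb
      rw [hΨadj] at hb
      exact hb.1.symm
    · intro a; trivial
  calc Nat.factorial n ≤ (MFin f (Finset.univ : Finset V)).card := hkey
    _ = (↑(MFin f (Finset.univ : Finset V)) : Set (V → V)).ncard := by
        rw [Set.ncard_coe_finset]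
    _ = (Ψ '' ↑(MFin f (Finset.univ : Finset V))).ncard :=
        (Set.ncard_image_of_injOn hinjΨ).symm
    _ ≤ _ := Set.ncard_le_ncard hsub hfinPM
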